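/- arXiv:2404.06880 — 4 statements merged into one kernel-verified Lean document; each statement's English description precedes it below -/
import Mathlib

section
/- Let P_t, P_v, ρ, σ₀, σ_v, d₁, d₂, d₃ > 0 and k > 0. Define γ_AP = k / (σ₀² d₂² d₃² (ρ P_t + σ_v² d₁²)) and γ_PA = k / (d₁² d₂² σ_v² ρ P_v). Then γ_AP ≥ γ_PA if and only if 1/ρ ≤ P_v/(d₃² σ₀²) − P_t/(d₁² σ_v²). -/
/-- Proposition 3: `γ_AP ≥ γ_PA` iff `1/ρ ≤ P_v/(d₃²σ₀²) − P_t/(d₁²σ_v²)`. -/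
theorem stmt_6 (Pt Pv ρ σ0 σv d1 d2 d3 k : ℝ)
    (hPt : 0 < Pt) (hPv : 0 < Pv) (hρ : 0 < ρ) (hσ0 : 0 < σ0) (hσv : 0 < σv)
    (hd1 : 0 < d1) (hd2 : 0 < d2) (hd3 : 0 < d3) (hk : 0 < k) :
    k / (d1 ^ 2 * d2 ^ 2 * σv ^ 2 * ρ * Pv) ≤
        k / (σ0 ^ 2 * d2 ^ 2 * d3 ^ 2 * (ρ * Pt + σv ^ 2 * d1 ^ 2)) ↔
      1 / ρ ≤ Pv / (d3 ^ 2 * σ0 ^ 2) - Pt / (d1 ^ 2 * σv ^ 2) := by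
  have hA : 0 < d1 ^ 2 * d2 ^ 2 * σv ^ 2 * ρ * Pv := by positivity
  have hB : 0 < σ0 ^ 2 * d2 ^ 2 * d3 ^ 2 * (ρ * Pt + σv ^ 2 * d1 ^ 2) := by positivity
  rw [div_le_div_iff₀ hA hB, div_sub_div _ _ (by positivity) (by positivity),
    div_le_div_iff₀ hρ (by positivity)]
  rw [mul_le_mul_iff_right₀ hk]
  have hd2' : (0:ℝ) < d2 ^ 2 := by positivity
  constructor
  · intro h
    nlinarith [h, hd2']
  · intro h
    nlinarith [h, hd2']
end

section
/- Let P_t, P_v, ρ, σ₀, σ_v, d₁, d₂, d₃, N_a, N_p > 0. With α² = P_v d₁² / (N_a (P_t ρ + d₁² σ_v²)), signal power S = P_t α² ρ³ N_a² N_p² / (d₁² d₂² d₃²) and effective noise N = σ_v² α² ρ² N_a N_p² / (d₂² d₃²) + σ₀², the ratio satisfies S/N = P_t P_v ρ³ / (P_v σ_v² ρ² d₁² / N_a + σ₀² d₂² d₃² (ρ P_t + σ_v² d₁²) / (N_a N_p²)). -/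
/-- Closed-form TAPR SNR (eq. (10)): with `α²` the optimal amplification gain,
the ratio of signal power to effective noise power equals
`P_t P_v ρ³ / (P_v σ_v² ρ² d₁²/N_a + σ₀² d₂² d₃² (ρ P_t + σ_v² d₁²)/(N_a N_p²))`. -/
theorem stmt_8 (Pt Pv ρ σ0 σv d1 d2 d3 Na Np α2 S N : ℝ)
    (hPt : 0 < Pt) (hPv : 0 < Pv) (hρ : 0 < ρ) (hσ0 : 0 < σ0) (hσv : 0 < σv)
    (hd1 : 0 < d1) (hd2 : 0 < d2) (hd3 : 0 < d3) (hNa : 0 < Na) (hNp : 0 < Np)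
    (hα : α2 = Pv * d1 ^ 2 / (Na * (Pt * ρ + d1 ^ 2 * σv ^ 2)))
    (hS : S = Pt * α2 * ρ ^ 3 * Na ^ 2 * Np ^ 2 / (d1 ^ 2 * d2 ^ 2 * d3 ^ 2))
    (hN : N = σv ^ 2 * α2 * ρ ^ 2 * Na * Np ^ 2 / (d2 ^ 2 * d3 ^ 2) + σ0 ^ 2) :
    S / N = Pt * Pv * ρ ^ 3 /
      (Pv * σv ^ 2 * ρ ^ 2 * d1 ^ 2 / Na +
        σ0 ^ 2 * d2 ^ 2 * d3 ^ 2 * (ρ * Pt + σv ^ 2 * d1 ^ 2) / (Na * Np ^ 2)) := by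
  have hden : 0 < Pt * ρ + d1 ^ 2 * σv ^ 2 := by positivity
  have hNpos : 0 < N := by
    rw [hN, hα]; positivity
  have hDpos : 0 < Pv * σv ^ 2 * ρ ^ 2 * d1 ^ 2 / Na +
        σ0 ^ 2 * d2 ^ 2 * d3 ^ 2 * (ρ * Pt + σv ^ 2 * d1 ^ 2) / (Na * Np ^ 2) := by
    positivity
  subst hα hS hN
  rw [div_eq_div_iff hNpos.ne' hDpos.ne']
  field_simp
end

section
/- Let C₁, C₂, W₁, W₂, M > 0 with W₁ + W₂ < M (so that an interior feasible point with at least one element each exists). Consider minimizing G(x₁, x₂) = C₁/x₁ + C₂/(x₁ x₂²) over x₁, x₂ > 0 with W₁ x₁ + W₂ x₂ ≤ M. Then any minimizer (x₁*, x₂*) satisfies x₂* ≤ 2M/(3W₂), i.e., including the first (pure 1/x₁) term in the objective never increases the optimal passive allocation beyond the two-term approximation's value 2M/(3W₂). -/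
lemma stmt15_aux (a s M : ℝ) (ha : 0 < a) (hs : 2 * M / 3 < s) (hM : 0 < M)
    (hb : a + s ≤ M) :
    a * s ^ 2 ≤ (a + (s - 2 * M / 3)) * (2 * M / 3) ^ 2 := by
  nlinarith [mul_nonneg (show (0:ℝ) ≤ M - s - a by linarith)
      (show (0:ℝ) ≤ s ^ 2 - (2 * M / 3) ^ 2 by nlinarith),
    mul_nonneg (sq_nonneg (s - 2 * M / 3)) (show (0:ℝ) ≤ s + M / 3 by nlinarith)]

/-- Exact objective `G(x₁,x₂) = C₁/x₁ + C₂/(x₁ x₂²)`: any minimizer under the budget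
constraint has passive allocation at most the two-term optimum `2M/(3W₂)`. -/
theorem stmt_15 (C₁ C₂ W₁ W₂ M : ℝ)
    (hC₁ : 0 < C₁) (hC₂ : 0 < C₂) (hW₁ : 0 < W₁) (hW₂ : 0 < W₂) (hM : 0 < M)
    (hint : W₁ + W₂ < M)
    (x₁ x₂ : ℝ) (hx₁ : 0 < x₁) (hx₂ : 0 < x₂)
    (hfeas : W₁ * x₁ + W₂ * x₂ ≤ M)
    (hmin : ∀ y₁ y₂ : ℝ, 0 < y₁ → 0 < y₂ → W₁ * y₁ + W₂ * y₂ ≤ M →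
      C₁ / x₁ + C₂ / (x₁ * x₂ ^ 2) ≤ C₁ / y₁ + C₂ / (y₁ * y₂ ^ 2)) :
    x₂ ≤ 2 * M / (3 * W₂) := by
  by_contra hcon
  push_neg at hcon
  set t : ℝ := 2 * M / (3 * W₂) with ht
  have ht0 : 0 < t := by positivity
  set y₁ : ℝ := x₁ + W₂ * (x₂ - t) / W₁ with hy₁
  have hy₁x : x₁ < y₁ := by
    have : 0 < W₂ * (x₂ - t) / W₁ := by
      apply div_pos (mul_pos hW₂ (by linarith)) hW₁
    rw [hy₁]; linarith [this]
  have hy₁0 : 0 < y₁ := hx₁.trans hy₁x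
  have e1 : W₂ * t = 2 * M / 3 := by
    rw [ht]; field_simp
  have e2 : W₁ * y₁ = W₁ * x₁ + W₂ * x₂ - 2 * M / 3 := by
    rw [hy₁]; field_simp; linarith [e1]
  have hfeas' : W₁ * y₁ + W₂ * t ≤ M := by
    rw [e2, e1]; linarith
  have h := hmin y₁ t hy₁0 ht0 hfeas'
  have h1 : C₁ / y₁ < C₁ / x₁ := div_lt_div_of_pos_left hC₁ hx₁ hy₁x
  -- key inequality
  have hsM : 2 * M / 3 < W₂ * x₂ := by
    have : 2 * M / 3 = W₂ * t := e1.symm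
    rw [this]
    exact (mul_lt_mul_iff_right₀ hW₂).2 hcon
  have haux : (W₁ * x₁) * (W₂ * x₂) ^ 2
      ≤ ((W₁ * x₁) + ((W₂ * x₂) - 2 * M / 3)) * (2 * M / 3) ^ 2 := by
    apply stmt15_aux _ _ _ (mul_pos hW₁ hx₁) hsM hM
    linarith
  have key : x₁ * x₂ ^ 2 ≤ y₁ * t ^ 2 := by
    have hpos : (0:ℝ) < W₁ * W₂ ^ 2 := by positivity
    rw [← mul_le_mul_iff_left₀ hpos]
    have l1 : x₁ * x₂ ^ 2 * (W₁ * W₂ ^ 2) = (W₁ * x₁) * (W₂ * x₂) ^ 2 := by ring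
    have l2 : y₁ * t ^ 2 * (W₁ * W₂ ^ 2)
        = ((W₁ * x₁) + ((W₂ * x₂) - 2 * M / 3)) * (2 * M / 3) ^ 2 := by
      have : y₁ * t ^ 2 * (W₁ * W₂ ^ 2) = (W₁ * y₁) * (W₂ * t) ^ 2 := by ring
      rw [this, e1, e2]; ring
    rw [l1, l2]; exact haux
  have h2 : C₂ / (y₁ * t ^ 2) ≤ C₂ / (x₁ * x₂ ^ 2) :=
    div_le_div_of_nonneg_left hC₂.le (by positivity) key
  linarith
end

section
/- Let a, b > 0 and M, W₁, W₂ > 0. On the budget curve x₁ = (M − W₂ x₂)/W₁, 0 < x₂ < M/W₂, the function G(x₂) = a W₁/(M − W₂ x₂) + b W₁/((M − W₂ x₂) x₂²) is differentiable, and its derivative has the same sign as a W₂ x₂³ − b(2M − 3W₂ x₂). In particular G has at least one critical point in (0, 2M/(3W₂)). -/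
open Set

/-- Reduced exact objective on the budget curve:
`G(x₂) = aW₁/(M−W₂x₂) + bW₁/((M−W₂x₂)x₂²)` is differentiable on `(0, M/W₂)`,
its derivative has the same sign as `aW₂x₂³ − b(2M − 3W₂x₂)`, and `G` has at least one
critical point in `(0, 2M/(3W₂))`. -/
theorem stmt_16 (a b M W₁ W₂ : ℝ)
    (ha : 0 < a) (hb : 0 < b) (hM : 0 < M) (hW₁ : 0 < W₁) (hW₂ : 0 < W₂)
    (G : ℝ → ℝ)
    (hG : ∀ x, G x = a * W₁ / (M - W₂ * x) + b * W₁ / ((M - W₂ * x) * x ^ 2)) :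
    (∀ x ∈ Ioo (0 : ℝ) (M / W₂), DifferentiableAt ℝ G x) ∧
    (∀ x ∈ Ioo (0 : ℝ) (M / W₂),
      (0 < deriv G x ↔ 0 < a * W₂ * x ^ 3 - b * (2 * M - 3 * W₂ * x)) ∧
      (deriv G x = 0 ↔ a * W₂ * x ^ 3 - b * (2 * M - 3 * W₂ * x) = 0) ∧
      (deriv G x < 0 ↔ a * W₂ * x ^ 3 - b * (2 * M - 3 * W₂ * x) < 0)) ∧
    (∃ x ∈ Ioo (0 : ℝ) (2 * M / (3 * W₂)), deriv G x = 0) := by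
  obtain rfl : G = fun x => a * W₁ / (M - W₂ * x) + b * W₁ / ((M - W₂ * x) * x ^ 2) :=
    funext hG
  -- key derivative computation
  have key : ∀ x ∈ Ioo (0 : ℝ) (M / W₂),
      HasDerivAt (fun x => a * W₁ / (M - W₂ * x) + b * W₁ / ((M - W₂ * x) * x ^ 2))
        ((a * W₂ * x ^ 3 - b * (2 * M - 3 * W₂ * x)) * (W₁ / ((M - W₂ * x) ^ 2 * x ^ 3))) x := by
    intro x hx
    obtain ⟨hx0, hxM⟩ := hx
    have hMx : 0 < M - W₂ * x := by
      have := (lt_div_iff₀ hW₂).mp hxM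
      nlinarith
    have hMx' : M - W₂ * x ≠ 0 := ne_of_gt hMx
    have hx0' : x ≠ 0 := ne_of_gt hx0
    have hu : HasDerivAt (fun x => M - W₂ * x) (-(W₂ * 1)) x :=
      ((hasDerivAt_id x).const_mul W₂).const_sub M
    have hx2 : HasDerivAt (fun x : ℝ => x ^ 2) ((2 : ℕ) * x ^ (2 - 1)) x := hasDerivAt_pow 2 x
    have hv := hu.mul hx2
    have h1 := (hasDerivAt_const x (a * W₁)).div hu hMx'
    have h2 := (hasDerivAt_const x (b * W₁)).div hv (by
      exact mul_ne_zero hMx' (pow_ne_zero 2 hx0'))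
    have := h1.add h2
    refine this.congr_deriv ?_
    simp only [Pi.mul_apply]
    field_simp
    ring
  refine ⟨fun x hx => (key x hx).differentiableAt, fun x hx => ?_, ?_⟩
  · obtain ⟨hx0, hxM⟩ := hx
    have hMx : 0 < M - W₂ * x := by
      have := (lt_div_iff₀ hW₂).mp hxM
      nlinarith
    have hd := (key x ⟨hx0, hxM⟩).deriv
    rw [hd]
    have hc : 0 < W₁ / ((M - W₂ * x) ^ 2 * x ^ 3) := by positivity
    set S := a * W₂ * x ^ 3 - b * (2 * M - 3 * W₂ * x) with hS
    refine ⟨⟨fun h => ?_, fun h => by positivity⟩, ⟨fun h => ?_, fun h => by rw [h]; ring⟩,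
      ⟨fun h => ?_, fun h => by nlinarith⟩⟩
    · nlinarith
    · rcases mul_eq_zero.mp h with h' | h'
      · exact h'
      · exact absurd h' (ne_of_gt hc)
    · nlinarith
  · -- critical point via IVT
    set c := 2 * M / (3 * W₂) with hc
    have hc0 : 0 < c := by positivity
    have hcM : c < M / W₂ := by
      rw [hc, div_lt_div_iff₀ (by positivity) hW₂]
      nlinarith
    set S := fun x => a * W₂ * x ^ 3 - b * (2 * M - 3 * W₂ * x) with hSdef
    have hcont : ContinuousOn S (Icc 0 c) := by fun_prop
    have hS0 : S 0 < 0 := by simp [hSdef]; nlinarith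
    have hSc : 0 < S c := by
      have h3 : 3 * W₂ * c = 2 * M := by
        rw [hc]; field_simp
      have hpos : 0 < a * W₂ * c ^ 3 := by positivity
      simp only [hSdef]
      nlinarith
    have hsub := intermediate_value_Ioo (le_of_lt hc0) hcont
    have h0mem : (0 : ℝ) ∈ Ioo (S 0) (S c) := ⟨hS0, hSc⟩
    obtain ⟨x, hxmem, hSx⟩ := hsub h0mem
    refine ⟨x, hxmem, ?_⟩
    have hxI : x ∈ Ioo (0 : ℝ) (M / W₂) := ⟨hxmem.1, lt_trans hxmem.2 hcM⟩
    rw [(key x hxI).deriv]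
    have hz : a * W₂ * x ^ 3 - b * (2 * M - 3 * W₂ * x) = 0 := hSx
    rw [hz]; ring
end
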